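/- If X(ℝⁿ) is a Banach function space satisfying the A_X-condition sup_Q (1/|Q|) ‖χ_Q‖_X ‖χ_Q‖_{X'} < ∞ (supremum over axis-parallel cubes Q), then X(ℝⁿ) satisfies the doubling property: for every τ > 1 there is C_τ > 0 with ‖χ_{B(y,τR)}‖_X ≤ C_τ ‖χ_{B(y,R)}‖_X for all y ∈ ℝⁿ and all R > 0. -/

import Mathlib

open MeasureTheory Filter ENNReal Metric

noncomputable section

/-- A Banach function norm on measurable functions over a measure space `α`,
following Bennett–Sharpley: axioms (A1)–(A5). -/
structure BanachFunctionNorm (α : Type) [MeasureSpace α] where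
  ρ : (α → ℝ≥0∞) → ℝ≥0∞
  ρ_zero : ∀ f, ρ f = 0 ↔ f =ᵐ[volume] 0
  ρ_smul : ∀ (a : NNReal) (f : α → ℝ≥0∞), ρ (fun x => (a : ℝ≥0∞) * f x) = a * ρ f
  ρ_add : ∀ f g, ρ (fun x => f x + g x) ≤ ρ f + ρ g
  ρ_mono : ∀ f g, (∀ᵐ x ∂volume, f x ≤ g x) → ρ f ≤ ρ g
  ρ_fatou : ∀ (f : ℕ → α → ℝ≥0∞),
      (∀ j, ∀ᵐ x ∂volume, f j x ≤ f (j+1) x) →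
      ρ (fun x => ⨆ j, f j x) = ⨆ j, ρ (f j)
  ρ_finite : ∀ E : Set α, MeasurableSet E → volume E < ⊤ → ρ (E.indicator 1) < ⊤
  ρ_loc_embed : ∀ E : Set α, MeasurableSet E → volume E < ⊤ →
      ∃ C : ℝ≥0∞, C < ⊤ ∧ ∀ f : α → ℝ≥0∞, ∫⁻ x in E, f x ∂volume ≤ C * ρ f

/-- The associate (Köthe dual) norm of a Banach function norm. -/
def BanachFunctionNorm.associate {α : Type} [MeasureSpace α]
    (X : BanachFunctionNorm α) (g : α → ℝ≥0∞) : ℝ≥0∞ :=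
  ⨆ f ∈ {f : α → ℝ≥0∞ | X.ρ f ≤ 1}, ∫⁻ x, f x * g x ∂volume

/-- An axis-parallel cube with corner `a` and side length `h`. -/
def axisCube {n : ℕ} (a : EuclideanSpace ℝ (Fin n)) (h : ℝ) :
    Set (EuclideanSpace ℝ (Fin n)) :=
  {x | ∀ i : Fin n, x i ∈ Set.Icc (a i) (a i + h)}

set_option maxHeartbeats 1000000 in
private lemma coord_le_dist {n : ℕ} (x y : EuclideanSpace ℝ (Fin n)) (i : Fin n) :
    |x i - y i| ≤ dist x y := by
  rw [EuclideanSpace.dist_eq]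
  calc |x i - y i| = dist (x i) (y i) := (Real.dist_eq _ _).symm
    _ = Real.sqrt (dist (x i) (y i) ^ 2) := (Real.sqrt_sq dist_nonneg).symm
    _ ≤ _ := Real.sqrt_le_sqrt (show dist (x i) (y i) ^ 2 ≤ ∑ j, dist (x j) (y j) ^ 2 from
        Finset.single_le_sum (f := fun j => dist (x j) (y j) ^ 2)
          (fun j _ => sq_nonneg _) (Finset.mem_univ i))

set_option maxHeartbeats 1000000 in
private lemma dist_le_of_coord {n : ℕ} (x y : EuclideanSpace ℝ (Fin n)) {t : ℝ}
    (ht : 0 ≤ t) (hc : ∀ i, |x i - y i| ≤ t) : dist x y ≤ t * Real.sqrt n := by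
  rw [EuclideanSpace.dist_eq]
  have hsum : ∑ i, dist (x i) (y i) ^ 2 ≤ (n : ℝ) * t ^ 2 := by
    calc ∑ i, dist (x i) (y i) ^ 2 ≤ ∑ _i : Fin n, t ^ 2 :=
          Finset.sum_le_sum fun i _ => by
            have h1 : dist (x i) (y i) ≤ t := by rw [Real.dist_eq]; exact hc i
            exact pow_le_pow_left₀ dist_nonneg h1 2
      _ = (n : ℝ) * t ^ 2 := by simp [Finset.sum_const, Finset.card_univ, nsmul_eq_mul]
  calc Real.sqrt (∑ i, dist (x i) (y i) ^ 2) ≤ Real.sqrt ((n : ℝ) * t ^ 2) :=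
        Real.sqrt_le_sqrt hsum
    _ = t * Real.sqrt n := by
        rw [Real.sqrt_mul (Nat.cast_nonneg n), Real.sqrt_sq ht, mul_comm]

set_option maxHeartbeats 4000000

/-- If a Banach function space `X(ℝⁿ)` satisfies the `A_X`-condition
`sup_Q (1/|Q|) ‖χ_Q‖_X ‖χ_Q‖_{X'} < ∞` over axis-parallel cubes `Q`,
then `X(ℝⁿ)` satisfies the doubling property for every `τ > 1`. -/
theorem AX_condition_implies_doubling {n : ℕ}
    (X : BanachFunctionNorm (EuclideanSpace ℝ (Fin n)))
    (hAX : ∃ C : ℝ≥0∞, C < ⊤ ∧ ∀ (a : EuclideanSpace ℝ (Fin n)) (h : ℝ), 0 < h →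
      X.ρ ((axisCube a h).indicator 1) * X.associate ((axisCube a h).indicator 1)
        ≤ C * volume (axisCube a h)) :
    ∀ τ : ℝ, 1 < τ → ∃ Cτ : ℝ≥0∞, 0 < Cτ ∧ Cτ < ⊤ ∧
      ∀ (y : EuclideanSpace ℝ (Fin n)) (R : ℝ), 0 < R →
        X.ρ ((Metric.ball y (τ * R)).indicator 1)
          ≤ Cτ * X.ρ ((Metric.ball y R).indicator 1) := by
  obtain ⟨C, hCt, hA⟩ := hAX
  intro τ hτ
  refine ⟨C * ENNReal.ofReal ((τ * Real.sqrt n) ^ n) + 1, ?_, ?_, ?_⟩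
  · exact lt_of_lt_of_le zero_lt_one le_add_self
  · exact ENNReal.add_lt_top.mpr ⟨ENNReal.mul_lt_top hCt ENNReal.ofReal_lt_top, one_lt_top⟩
  intro y R hR
  have hτR : 0 < τ * R := mul_pos (lt_trans zero_lt_one hτ) hR
  -- the cube
  set a : EuclideanSpace ℝ (Fin n) := WithLp.toLp 2 (fun i => y i - τ * R) with ha
  set Q : Set (EuclideanSpace ℝ (Fin n)) := axisCube a (2 * (τ * R)) with hQdef
  have hTQ : ball y (τ * R) ⊆ Q := by
    intro x hx i
    have h1 : |x i - y i| ≤ dist x y := coord_le_dist x y i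
    have h2 : dist x y < τ * R := mem_ball.mp hx
    have h3 := abs_lt.mp (lt_of_le_of_lt h1 h2)
    constructor
    · show y i - τ * R ≤ x i
      linarith [h3.1]
    · show x i ≤ y i - τ * R + 2 * (τ * R)
      linarith [h3.2]
  have hBQ : ball y R ⊆ Q :=
    Set.Subset.trans (ball_subset_ball (by nlinarith)) hTQ
  have hQcb : Q ⊆ closedBall y (τ * R * Real.sqrt n) := by
    intro x hx
    rw [mem_closedBall]
    refine dist_le_of_coord x y hτR.le fun i => ?_
    obtain ⟨hl, hu⟩ := hx i
    have hl' : y i - τ * R ≤ x i := hl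
    have hu' : x i ≤ y i - τ * R + 2 * (τ * R) := hu
    rw [abs_le]; constructor <;> linarith
  -- basic measure facts
  set μ₁ := volume (ball (0 : EuclideanSpace ℝ (Fin n)) 1) with hμ₁def
  have hμB : volume (ball y R) = ENNReal.ofReal (R ^ n) * μ₁ := by
    rw [hμ₁def, Measure.addHaar_ball_of_pos _ _ hR, finrank_euclideanSpace_fin]
  have hμB0 : volume (ball y R) ≠ 0 := (measure_ball_pos _ y hR).ne'
  have hμBt : volume (ball y R) ≠ ⊤ := measure_ball_lt_top.ne
  set r := X.ρ ((ball y R).indicator 1) with hrdef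
  have hrt : r ≠ ⊤ := (X.ρ_finite _ measurableSet_ball measure_ball_lt_top).ne
  have hr0 : r ≠ 0 := by
    intro h0
    have hae := (X.ρ_zero _).mp h0
    have : volume (ball y R) = 0 := by
      rw [measure_eq_zero_iff_ae_notMem]
      filter_upwards [hae] with x hx
      intro hxB
      simp [Set.indicator_of_mem hxB] at hx
    exact hμB0 this
  -- Hölder-type lower bound for the associate norm of χ_Q
  set av : NNReal := r⁻¹.toNNReal with havdef
  have hav : (av : ℝ≥0∞) = r⁻¹ := ENNReal.coe_toNNReal (by simp [hr0])
  have hf1 : X.ρ (fun x => (av : ℝ≥0∞) * (ball y R).indicator 1 x) = 1 := by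
    rw [X.ρ_smul, hav, ← hrdef, ENNReal.inv_mul_cancel hr0 hrt]
  have hint : ∫⁻ x, ((av : ℝ≥0∞) * (ball y R).indicator 1 x) * Q.indicator 1 x ∂volume
      = (av : ℝ≥0∞) * volume (ball y R) := by
    have hptw : ∀ x, ((av : ℝ≥0∞) * (ball y R).indicator 1 x) * Q.indicator 1 x
        = (av : ℝ≥0∞) * (ball y R).indicator 1 x := by
      intro x
      by_cases hx : x ∈ ball y R
      · simp [Set.indicator_of_mem hx, Set.indicator_of_mem (hBQ hx)]
      · simp [Set.indicator_of_notMem hx]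
    rw [lintegral_congr hptw, lintegral_const_mul' _ _ ENNReal.coe_ne_top,
      lintegral_indicator_one measurableSet_ball]
  have hd_lb : r⁻¹ * volume (ball y R) ≤ X.associate (Q.indicator 1) := by
    rw [← hav]
    calc (av : ℝ≥0∞) * volume (ball y R)
        = ∫⁻ x, ((av : ℝ≥0∞) * (ball y R).indicator 1 x) * Q.indicator 1 x ∂volume :=
          hint.symm
      _ ≤ X.associate (Q.indicator 1) :=
          le_iSup₂ (f := fun f (_ : f ∈ {f | X.ρ f ≤ 1}) =>
            ∫⁻ x, f x * Q.indicator 1 x ∂volume)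
            (fun x => (av : ℝ≥0∞) * (ball y R).indicator 1 x) (le_of_eq hf1)
  have hd0 : X.associate (Q.indicator 1) ≠ 0 := by
    intro h0
    rw [h0] at hd_lb
    exact (ENNReal.mul_pos (by simp [hrt]) hμB0).ne' (le_antisymm hd_lb bot_le)
  -- volume of the cube
  have hvolQt : volume Q ≠ ⊤ :=
    (lt_of_le_of_lt (measure_mono hQcb) measure_closedBall_lt_top).ne
  have hvolQ : volume Q ≤ ENNReal.ofReal ((τ * Real.sqrt n) ^ n) * volume (ball y R) := by
    calc volume Q ≤ volume (closedBall y (τ * R * Real.sqrt n)) := measure_mono hQcb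
      _ = ENNReal.ofReal ((τ * R * Real.sqrt n) ^ n) * μ₁ := by
          rw [hμ₁def, Measure.addHaar_closedBall _ _
            (mul_nonneg hτR.le (Real.sqrt_nonneg _)), finrank_euclideanSpace_fin]
      _ = ENNReal.ofReal ((τ * Real.sqrt n) ^ n) * (ENNReal.ofReal (R ^ n) * μ₁) := by
          rw [show τ * R * Real.sqrt n = τ * Real.sqrt n * R by ring, mul_pow,
            ENNReal.ofReal_mul (pow_nonneg (mul_nonneg (by linarith) (Real.sqrt_nonneg _)) n),
            mul_assoc]
      _ = ENNReal.ofReal ((τ * Real.sqrt n) ^ n) * volume (ball y R) := by rw [hμB]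
  -- main chain
  have hmain : X.ρ (Q.indicator 1) ≤ (C * ENNReal.ofReal ((τ * Real.sqrt n) ^ n)) * r := by
    have step1 : X.ρ (Q.indicator 1) ≤ (C * volume Q) / X.associate (Q.indicator 1) := by
      rw [ENNReal.le_div_iff_mul_le (Or.inl hd0) (Or.inr (ENNReal.mul_ne_top hCt.ne hvolQt))]
      exact hA a (2 * (τ * R)) (by linarith)
    have step2 : (C * volume Q) / X.associate (Q.indicator 1)
        ≤ (C * volume Q) / (r⁻¹ * volume (ball y R)) :=
      ENNReal.div_le_div_left hd_lb _
    have step3 : (C * volume Q) / (r⁻¹ * volume (ball y R))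
        = C * volume Q * r * (volume (ball y R))⁻¹ := by
      rw [div_eq_mul_inv, ENNReal.mul_inv (Or.inl (by simp [hrt])) (Or.inl (by simp [hr0])),
        inv_inv, ← mul_assoc]
    have step4 : C * volume Q * r * (volume (ball y R))⁻¹
        ≤ (C * ENNReal.ofReal ((τ * Real.sqrt n) ^ n)) * r := by
      have hQB : volume Q * (volume (ball y R))⁻¹ ≤ ENNReal.ofReal ((τ * Real.sqrt n) ^ n) := by
        calc volume Q * (volume (ball y R))⁻¹
            ≤ (ENNReal.ofReal ((τ * Real.sqrt n) ^ n) * volume (ball y R))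
                * (volume (ball y R))⁻¹ := mul_le_mul_left hvolQ _
          _ = ENNReal.ofReal ((τ * Real.sqrt n) ^ n)
                * (volume (ball y R) * (volume (ball y R))⁻¹) := by ring
          _ = ENNReal.ofReal ((τ * Real.sqrt n) ^ n) := by
              rw [ENNReal.mul_inv_cancel hμB0 hμBt, mul_one]
      calc C * volume Q * r * (volume (ball y R))⁻¹
          = (C * r) * (volume Q * (volume (ball y R))⁻¹) := by ring
        _ ≤ (C * r) * ENNReal.ofReal ((τ * Real.sqrt n) ^ n) := mul_le_mul_right hQB _
        _ = (C * ENNReal.ofReal ((τ * Real.sqrt n) ^ n)) * r := by ring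
    exact le_trans step1 (le_trans step2 (le_of_eq step3 |>.trans step4))
  -- conclusion
  have hmono : X.ρ ((ball y (τ * R)).indicator 1) ≤ X.ρ (Q.indicator 1) := by
    refine X.ρ_mono _ _ (ae_of_all _ fun x => ?_)
    by_cases hx : x ∈ ball y (τ * R)
    · simp [Set.indicator_of_mem hx, Set.indicator_of_mem (hTQ hx)]
    · simp [Set.indicator_of_notMem hx]
  calc X.ρ ((ball y (τ * R)).indicator 1) ≤ X.ρ (Q.indicator 1) := hmono
    _ ≤ (C * ENNReal.ofReal ((τ * Real.sqrt n) ^ n)) * r := hmain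
    _ ≤ (C * ENNReal.ofReal ((τ * Real.sqrt n) ^ n) + 1) * r :=
        mul_le_mul_left le_self_add _
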